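/- arXiv:2210.00419 — 3 statements merged into one kernel-verified Lean document; each statement's English description precedes it below -/
import Mathlib

section
/- Let A_{m,n,ℓ} = ∫_ℝ h_m(x)·h_n(x)·h_ℓ(x)·e^{−x²/4} dx for natural numbers m, n, ℓ. Then A_{m,n,ℓ} = 0 unless m + n + ℓ is even and the triangle inequalities n ≤ m + ℓ, m ≤ n + ℓ, ℓ ≤ m + n all hold, in which case A_{m,n,ℓ} = (4π)^{−1/4}·(m!·n!·ℓ!)^{1/2} · ( ((m+n−ℓ)/2)! · ((n+ℓ−m)/2)! · ((m+ℓ−n)/2)! )^{−1}. -/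
open Real MeasureTheory

/-- Physicists' Hermite polynomials, determined by `H 0 = 1`, `H 1 x = 2x` and the
recurrence `H (m+1) x = 2x · H m x − (H m)' x`. -/
noncomputable def physHermite : ℕ → ℝ → ℝ
  | 0 => fun _ => 1
  | m + 1 => fun x => 2 * x * physHermite m x - deriv (physHermite m) x

/-- The normalizing constants `c_m = 2^{−m/2} (4π)^{−1/4} (m!)^{−1/2}`. -/
noncomputable def hermiteCoeff (m : ℕ) : ℝ :=
  (2 : ℝ) ^ (-(m : ℝ) / 2) * (4 * π) ^ (-(1 / 4 : ℝ)) * (m.factorial : ℝ) ^ (-(1 / 2 : ℝ))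

/-- The normalized Hermite functions `h_m(y) = c_m · H_m(y/2)`. -/
noncomputable def h (m : ℕ) (y : ℝ) : ℝ := hermiteCoeff m * physHermite m (y / 2)

/-- The triple products `A_{m,n,ℓ} = ∫ h_m h_n h_ℓ e^{−x²/4} dx`. -/
noncomputable def A (m n ℓ : ℕ) : ℝ :=
  ∫ x : ℝ, h m x * h n x * h ℓ x * Real.exp (-x ^ 2 / 4)

section HermiteAux

open Polynomial Filter

noncomputable def P : ℕ → Polynomial ℝ
  | 0 => 1
  | m + 1 => 2 * Polynomial.X * P m - (P m).derivative

lemma P_succ (m : ℕ) : P (m + 1) = 2 * Polynomial.X * P m - (P m).derivative := rfl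

lemma C_two : (Polynomial.C (2:ℝ)) = 2 := map_ofNat Polynomial.C 2

lemma P_deriv : ∀ k : ℕ, (P k).derivative = Polynomial.C (2 * k : ℝ) * P (k - 1) := by
  intro k
  induction k with
  | zero => simp [P]
  | succ k ih =>
    rw [P_succ, derivative_sub, derivative_mul, derivative_mul, ih]
    match k with
    | 0 => simp [P, ← C_two]
    | j + 1 =>
      simp only [derivative_ofNat, derivative_X, derivative_C, Nat.add_sub_cancel, zero_mul,
        zero_add, mul_one, derivative_mul]
      rw [show (((j:ℕ) + 1 + 1 : ℕ) : ℝ) = ((j+1 : ℕ) : ℝ) + 1 by push_cast; ring]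
      rw [show Polynomial.C (2 * (((j+1:ℕ):ℝ) + 1)) = Polynomial.C (2 * ((j+1:ℕ):ℝ)) + Polynomial.C 2 by rw [← map_add]; ring_nf]
      rw [P_succ j, C_two]
      ring


lemma physHermite_eq (m : ℕ) : physHermite m = fun x => (P m).eval x := by
  induction m with
  | zero => funext x; simp [physHermite, P]
  | succ m ih =>
    funext x
    show 2 * x * physHermite m x - deriv (physHermite m) x = _
    rw [ih]
    rw [Polynomial.deriv (P m)]
    simp [P, Polynomial.eval_sub, Polynomial.eval_mul]

lemma tendsto_pg_atTop (Q : Polynomial ℝ) {b : ℝ} (hb : 0 < b) :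
    Tendsto (fun x : ℝ => Q.eval x * Real.exp (-b * x ^ 2)) atTop (nhds 0) := by
  apply squeeze_zero_norm'
  · filter_upwards [Filter.eventually_ge_atTop (max 1 (1/b))] with x hx
    have hx1 : (1:ℝ) ≤ x := le_trans (le_max_left _ _) hx
    have hxb : 1/b ≤ x := le_trans (le_max_right _ _) hx
    have h1 : x ≤ b * x ^ 2 := by
      have : 1 ≤ b * x := by
        rw [div_le_iff₀ hb] at hxb; nlinarith
      nlinarith
    have he : Real.exp (-b * x ^ 2) ≤ Real.exp (-x) := by
      apply Real.exp_le_exp.2; linarith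
    calc ‖Q.eval x * Real.exp (-b * x ^ 2)‖ = |Q.eval x| * Real.exp (-b * x^2) := by
          rw [norm_mul]; simp [Real.abs_exp]
      _ ≤ |Q.eval x| * Real.exp (-x) := mul_le_mul_of_nonneg_left he (abs_nonneg _)
      _ = |Q.eval x / Real.exp x| := by
          rw [Real.exp_neg, abs_div, Real.abs_exp, div_eq_mul_inv]
  · simpa using (Q.tendsto_div_exp_atTop).abs

lemma tendsto_pg_atBot (Q : Polynomial ℝ) {b : ℝ} (hb : 0 < b) :
    Tendsto (fun x : ℝ => Q.eval x * Real.exp (-b * x ^ 2)) atBot (nhds 0) := by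
  have h := (tendsto_pg_atTop (Q.comp (-Polynomial.X)) hb).comp tendsto_neg_atBot_atTop
  convert h using 2 with x
  simp [Function.comp, Polynomial.eval_comp]

lemma cont_pg (Q : Polynomial ℝ) {b : ℝ} : Continuous (fun x : ℝ => Q.eval x * Real.exp (-b * x ^ 2)) :=
  Q.continuous.mul (Real.continuous_exp.comp (continuous_const.mul (continuous_pow 2)))

lemma integrable_pg (Q : Polynomial ℝ) :
    Integrable (fun x : ℝ => Q.eval x * Real.exp (-x ^ 2)) := by
  have hg : Integrable (fun x : ℝ => Real.exp (-(1/2 : ℝ) * x ^ 2)) :=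
    integrable_exp_neg_mul_sq (by norm_num)
  have hO : ∀ l, Tendsto (fun x : ℝ => Q.eval x * Real.exp (-(1/2:ℝ) * x ^ 2)) l (nhds 0) →
      (fun x : ℝ => Q.eval x * Real.exp (-x ^ 2)) =O[l]
        fun x : ℝ => Real.exp (-(1/2 : ℝ) * x ^ 2) := by
    intro l ht
    rw [Asymptotics.isBigO_iff]
    refine ⟨1, ?_⟩
    have ht' := ht.norm
    rw [norm_zero] at ht'
    filter_upwards [ht'.eventually (eventually_le_nhds (by norm_num : (0:ℝ) < 1))] with x hx
    have key : Real.exp (-x ^ 2) = Real.exp (-(1/2:ℝ) * x ^ 2) * Real.exp (-(1/2:ℝ) * x ^ 2) := by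
      rw [← Real.exp_add]; ring_nf
    rw [key, ← mul_assoc, norm_mul]
    exact mul_le_mul_of_nonneg_right hx (norm_nonneg _)
  have hcont : Continuous (fun x : ℝ => Q.eval x * Real.exp (-x ^ 2)) := by
    have := cont_pg Q (b := 1)
    simpa using this
  exact hcont.locallyIntegrable.integrable_of_isBigO_atBot_atTop
    (hO _ (tendsto_pg_atBot Q (by norm_num))) (hg.integrableAtFilter _)
    (hO _ (tendsto_pg_atTop Q (by norm_num))) (hg.integrableAtFilter _)

noncomputable def J (Q : Polynomial ℝ) : ℝ := ∫ x : ℝ, Q.eval x * Real.exp (-x ^ 2)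

lemma cont_pg' (Q : Polynomial ℝ) : Continuous (fun x : ℝ => Q.eval x * Real.exp (-x ^ 2)) := by
  simpa using cont_pg Q (b := 1)

lemma J_add (Q R : Polynomial ℝ) : J (Q + R) = J Q + J R := by
  unfold J
  rw [← integral_add (integrable_pg Q) (integrable_pg R)]
  congr 1; funext x; simp [add_mul]

lemma J_sub (Q R : Polynomial ℝ) : J (Q - R) = J Q - J R := by
  unfold J
  rw [← integral_sub (integrable_pg Q) (integrable_pg R)]
  congr 1; funext x; simp [sub_mul]

lemma J_smul (a : ℝ) (Q : Polynomial ℝ) : J (Polynomial.C a * Q) = a * J Q := by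
  unfold J
  rw [← integral_const_mul]
  congr 1; funext x; simp; ring

-- the key integration-by-parts identity
lemma J_deriv (Q : Polynomial ℝ) : J Q.derivative = J (Polynomial.C 2 * Polynomial.X * Q) := by
  have hg' : ∀ x : ℝ, HasDerivAt (fun x : ℝ => Q.eval x * Real.exp (-x ^ 2))
      ((Q.derivative.eval x - 2 * x * Q.eval x) * Real.exp (-x ^ 2)) x := by
    intro x
    have h1 : HasDerivAt (fun x : ℝ => Q.eval x) (Q.derivative.eval x) x := Q.hasDerivAt x
    have h2 : HasDerivAt (fun x : ℝ => Real.exp (-x ^ 2)) (-(2*x) * Real.exp (-x ^ 2)) x := by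
      have hp : HasDerivAt (fun x : ℝ => -x ^ 2) (-(2*x)) x := by
        simpa using ((hasDerivAt_pow 2 x).fun_neg)
      simpa [mul_comm] using hp.exp
    have := h1.fun_mul h2
    exact this.congr_deriv (by ring)
  set f := fun x : ℝ => Q.eval x * Real.exp (-x ^ 2) with hf
  set D := Q.derivative - Polynomial.C 2 * Polynomial.X * Q with hD
  have hDeval : ∀ x : ℝ, (Q.derivative.eval x - 2 * x * Q.eval x) * Real.exp (-x ^ 2)
      = D.eval x * Real.exp (-x^2) := by
    intro x; simp only [hD, eval_sub, eval_mul, eval_C, eval_X]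
  have hint : Integrable (fun x : ℝ => D.eval x * Real.exp (-x^2)) := integrable_pg D
  have htop : Tendsto f atTop (nhds 0) := by simpa using tendsto_pg_atTop Q one_pos
  have hbot : Tendsto f atBot (nhds 0) := by simpa using tendsto_pg_atBot Q one_pos
  have hIoi : ∫ x in Set.Ioi (0:ℝ), D.eval x * Real.exp (-x^2) = 0 - f 0 := by
    apply integral_Ioi_of_hasDerivAt_of_tendsto (cont_pg' Q).continuousWithinAt
    · intro x _;
      have := hg' x
      rw [hDeval x] at this
      exact this
    · exact hint.integrableOn
    · exact htop
  have hIic : ∫ x in Set.Iic (0:ℝ), D.eval x * Real.exp (-x^2) = f 0 - 0 := by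
    apply integral_Iic_of_hasDerivAt_of_tendsto (cont_pg' Q).continuousWithinAt
    · intro x _
      have := hg' x
      rw [hDeval x] at this
      exact this
    · exact hint.integrableOn
    · exact hbot
  have hsplit : J D = 0 := by
    unfold J
    rw [← intervalIntegral.integral_Iic_add_Ioi (b := (0:ℝ)) hint.integrableOn hint.integrableOn, hIoi, hIic]
    ring
  have := J_sub Q.derivative (Polynomial.C 2 * Polynomial.X * Q)
  rw [← hD] at this
  linarith [hsplit, this]

noncomputable def II (m n ℓ : ℕ) : ℝ := J (P m * P n * P ℓ)

lemma II_comm12 (m n ℓ : ℕ) : II m n ℓ = II n m ℓ := by unfold II; ring_nf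

lemma II_comm13 (m n ℓ : ℕ) : II m n ℓ = II ℓ n m := by unfold II; ring_nf

lemma II_zero : II 0 0 0 = Real.sqrt π := by
  unfold II J
  have : ∀ x : ℝ, ((P 0 * P 0 * P 0).eval x) * Real.exp (-x^2) = Real.exp (-1 * x^2) := by
    intro x; simp [P]
  rw [show (fun x : ℝ => ((P 0 * P 0 * P 0).eval x) * Real.exp (-x^2)) = fun x : ℝ => Real.exp (-1 * x^2) from funext this]
  rw [integral_gaussian]
  norm_num

lemma II_rec (m n ℓ : ℕ) :
    II (m+1) n ℓ = 2*(n:ℝ) * II m (n-1) ℓ + 2*(ℓ:ℝ) * II m n (ℓ-1) := by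
  have hP : P (m+1) = Polynomial.C 2 * Polynomial.X * P m - (P m).derivative := by
    rw [P_succ, C_two]
  have step1 : II (m+1) n ℓ
      = J (Polynomial.C 2 * Polynomial.X * (P m * P n * P ℓ)) - J ((P m).derivative * P n * P ℓ) := by
    unfold II
    rw [hP, ← J_sub]
    congr 1; ring
  have step2 : J (Polynomial.C 2 * Polynomial.X * (P m * P n * P ℓ))
      = J ((P m * P n * P ℓ).derivative) := (J_deriv _).symm
  have step3 : (P m * P n * P ℓ).derivative
      = (P m).derivative * P n * P ℓ + P m * (P n).derivative * P ℓ + P m * P n * (P ℓ).derivative := by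
    rw [derivative_mul, derivative_mul]; ring
  have step4 : II (m+1) n ℓ = J (P m * (P n).derivative * P ℓ) + J (P m * P n * (P ℓ).derivative) := by
    rw [step1, step2, step3, J_add, J_add]; ring
  rw [step4, P_deriv n, P_deriv ℓ]
  have e1 : P m * (Polynomial.C (2*(n:ℝ)) * P (n-1)) * P ℓ = Polynomial.C (2*(n:ℝ)) * (P m * P (n-1) * P ℓ) := by ring
  have e2 : P m * P n * (Polynomial.C (2*(ℓ:ℝ)) * P (ℓ-1)) = Polynomial.C (2*(ℓ:ℝ)) * (P m * P n * P (ℓ-1)) := by ring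
  rw [e1, e2, J_smul, J_smul]
  unfold II
  ring

noncomputable def F (m n ℓ : ℕ) : ℝ :=
  if Even (m + n + ℓ) ∧ n ≤ m + ℓ ∧ m ≤ n + ℓ ∧ ℓ ≤ m + n then
    2 ^ ((m + n + ℓ) / 2) * Real.sqrt π * ((m.factorial * n.factorial * ℓ.factorial : ℕ) : ℝ) /
      ((((n + ℓ - m) / 2).factorial * ((m + ℓ - n) / 2).factorial *
        ((m + n - ℓ) / 2).factorial : ℕ) : ℝ)
  else 0

lemma cond_iff (m n ℓ : ℕ) :
    (Even (m + n + ℓ) ∧ n ≤ m + ℓ ∧ m ≤ n + ℓ ∧ ℓ ≤ m + n) ↔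
      ∃ a b c, m = b + c ∧ n = a + c ∧ ℓ = a + b := by
  constructor
  · rintro ⟨⟨t, ht⟩, h2, h3, h4⟩
    exact ⟨(n + ℓ - m) / 2, (m + ℓ - n) / 2, (m + n - ℓ) / 2, by omega, by omega, by omega⟩
  · rintro ⟨a, b, c, rfl, rfl, rfl⟩
    exact ⟨⟨a + b + c, by ring⟩, by omega, by omega, by omega⟩

lemma F_of_abc (a b c : ℕ) :
    F (b + c) (a + c) (a + b) = 2 ^ (a + b + c) * Real.sqrt π *
      (((b + c).factorial * (a + c).factorial * (a + b).factorial : ℕ) : ℝ) /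
      ((a.factorial * b.factorial * c.factorial : ℕ) : ℝ) := by
  unfold F
  rw [if_pos ((cond_iff _ _ _).2 ⟨a, b, c, rfl, rfl, rfl⟩)]
  rw [show (b + c + (a + c) + (a + b)) / 2 = a + b + c by omega,
    show (a + c + (a + b) - (b + c)) / 2 = a by omega,
    show (b + c + (a + b) - (a + c)) / 2 = b by omega,
    show (b + c + (a + c) - (a + b)) / 2 = c by omega]

lemma F_not (m n ℓ : ℕ) (h : ¬(Even (m + n + ℓ) ∧ n ≤ m + ℓ ∧ m ≤ n + ℓ ∧ ℓ ≤ m + n)) :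
    F m n ℓ = 0 := if_neg h

lemma fact_ne (k : ℕ) : ((k.factorial : ℕ) : ℝ) ≠ 0 := by
  exact_mod_cast k.factorial_ne_zero

lemma F_rec (m n ℓ : ℕ) :
    F (m+1) n ℓ = 2*(n:ℝ) * F m (n-1) ℓ + 2*(ℓ:ℝ) * F m n (ℓ-1) := by
  by_cases hC : Even (m+1 + n + ℓ) ∧ n ≤ m+1 + ℓ ∧ m+1 ≤ n + ℓ ∧ ℓ ≤ m+1 + n
  · obtain ⟨a, b, c, hm, hn, hl⟩ := (cond_iff _ _ _).1 hC
    match b, c with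
    | 0, 0 => omega
    | b'+1, c'+1 =>
      -- generic case
      have e0 : m+1 = (b'+1) + (c'+1) := hm
      have L : F (m+1) n ℓ = F ((b'+1) + (c'+1)) (a + (c'+1)) (a + (b'+1)) := by
        rw [show m + 1 = (b'+1) + (c'+1) from hm, show n = a + (c'+1) from hn, show ℓ = a + (b'+1) from hl]
      have R1 : F m (n-1) ℓ = F ((b'+1) + c') (a + c') (a + (b'+1)) := by
        rw [show m = (b'+1) + c' by omega, show n - 1 = a + c' by omega, ← hl]
      have R2 : F m n (ℓ-1) = F (b' + (c'+1)) (a + (c'+1)) (a + b') := by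
        rw [show m = b' + (c'+1) by omega, ← hn, show ℓ - 1 = a + b' by omega]
      rw [L, R1, R2, F_of_abc, F_of_abc, F_of_abc, hn, hl]
      have p1 : ((b'+1) + (c'+1)).factorial = ((b'+1)+(c'+1)) * ((b'+1) + c').factorial := by
        rw [show (b'+1) + (c'+1) = ((b'+1) + c') + 1 by omega]; exact Nat.factorial_succ _
      have p2 : (a + (c'+1)).factorial = (a + (c'+1)) * (a + c').factorial := by
        rw [show a + (c'+1) = (a + c') + 1 by omega]; exact Nat.factorial_succ _
      have p3 : (a + (b'+1)).factorial = (a + (b'+1)) * (a + b').factorial := by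
        rw [show a + (b'+1) = (a + b') + 1 by omega]; exact Nat.factorial_succ _
      have p4 : (b'+1).factorial = (b'+1) * b'.factorial := Nat.factorial_succ _
      have p5 : (c'+1).factorial = (c'+1) * c'.factorial := Nat.factorial_succ _
      have q1 : (a + (b'+1)) + (c'+1) = ((a + (b'+1)) + c') + 1 := by omega
      have q2 : a + b' + (c'+1) = ((a + (b'+1)) + c') := by omega
      rw [p1, p2, p3, p4, p5, q1, q2, pow_succ]
      push_cast
      have h1 := fact_ne a; have h2 := fact_ne b'; have h3 := fact_ne c'
      have h4 := fact_ne ((b'+1) + c'); have h5 := fact_ne (a + c'); have h6 := fact_ne (a + b')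
      field_simp
      ring
    | 0, c'+1 =>
      -- b = 0 : ℓ = a, n = a + c' + 1
      have L : F (m+1) n ℓ = F (0 + (c'+1)) (a + (c'+1)) (a + 0) := by
        rw [show m + 1 = 0 + (c'+1) from hm, show n = a + (c'+1) from hn, show ℓ = a + 0 from hl]
      have R1 : F m (n-1) ℓ = F (0 + c') (a + c') (a + 0) := by
        rw [show m = 0 + c' by omega, show n - 1 = a + c' by omega, ← hl]
      have R2 : 2*(ℓ:ℝ) * F m n (ℓ-1) = 0 := by
        match a with
        | 0 => rw [show ℓ = 0 by omega]; simp
        | a'+1 =>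
          rw [F_not m n (ℓ-1) ?_]; · ring
          rintro ⟨-, hbad, -, -⟩; omega
      rw [L, R1, R2, F_of_abc, F_of_abc, hn]
      simp only [Nat.zero_add, Nat.add_zero, Nat.factorial_zero]
      rw [show a + (c'+1) = a + c' + 1 by omega, pow_succ,
        Nat.factorial_succ c', Nat.factorial_succ (a+c')]
      push_cast
      have h1 := fact_ne a; have h3 := fact_ne c'; have h5 := fact_ne (a + c')
      field_simp
      ring
    | b'+1, 0 =>
      -- c = 0 : n = a, ℓ = a + b' + 1
      have L : F (m+1) n ℓ = F ((b'+1) + 0) (a + 0) (a + (b'+1)) := by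
        rw [show m + 1 = (b'+1) + 0 from hm, show n = a + 0 from hn, show ℓ = a + (b'+1) from hl]
      have R2 : F m n (ℓ-1) = F (b' + 0) (a + 0) (a + b') := by
        rw [show m = b' + 0 by omega, ← hn, show ℓ - 1 = a + b' by omega]
      have R1 : 2*(n:ℝ) * F m (n-1) ℓ = 0 := by
        match a with
        | 0 => rw [show n = 0 by omega]; simp
        | a'+1 =>
          rw [F_not m (n-1) ℓ ?_]; · ring
          rintro ⟨-, -, -, hbad⟩; omega
      rw [L, R1, R2, F_of_abc, F_of_abc, hl]
      simp only [Nat.add_zero, Nat.factorial_zero]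
      rw [show a + (b'+1) = a + b' + 1 by omega, pow_succ,
        Nat.factorial_succ b', Nat.factorial_succ (a+b')]
      push_cast
      have h1 := fact_ne a; have h2 := fact_ne b'; have h6 := fact_ne (a + b')
      field_simp
      ring
  · rw [F_not _ _ _ hC]
    have t1 : 2*(n:ℝ) * F m (n-1) ℓ = 0 := by
      match n with
      | 0 => simp
      | n'+1 =>
        simp only [Nat.add_sub_cancel]
        rw [F_not m n' ℓ ?_]; · ring
        rintro ⟨⟨t, ht⟩, h2, h3, h4⟩
        exact hC ⟨⟨t+1, by omega⟩, by omega, by omega, by omega⟩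
    have t2 : 2*(ℓ:ℝ) * F m n (ℓ-1) = 0 := by
      match ℓ with
      | 0 => simp
      | ℓ'+1 =>
        simp only [Nat.add_sub_cancel]
        rw [F_not m n ℓ' ?_]; · ring
        rintro ⟨⟨t, ht⟩, h2, h3, h4⟩
        exact hC ⟨⟨t+1, by omega⟩, by omega, by omega, by omega⟩
    rw [t1, t2]; ring

lemma F_comm12 (m n ℓ : ℕ) : F m n ℓ = F n m ℓ := by
  unfold F
  apply if_congr
  · constructor <;> rintro ⟨⟨t, ht⟩, h2, h3, h4⟩ <;> exact ⟨⟨t, by omega⟩, by omega, by omega, by omega⟩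
  · rw [show n + m + ℓ = m + n + ℓ by omega, show n + m - ℓ = m + n - ℓ by omega]
    rw [show m + ℓ - n = m + ℓ - n by omega]
    push_cast
    ring
  · rfl

lemma F_comm13 (m n ℓ : ℕ) : F m n ℓ = F ℓ n m := by
  unfold F
  apply if_congr
  · constructor <;> rintro ⟨⟨t, ht⟩, h2, h3, h4⟩ <;> exact ⟨⟨t, by omega⟩, by omega, by omega, by omega⟩
  · rw [show ℓ + n + m = m + n + ℓ by omega, show ℓ + n - m = n + ℓ - m by omega,
      show ℓ + m - n = m + ℓ - n by omega, show n + m - ℓ = m + n - ℓ by omega]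
    push_cast
    ring
  · rfl

lemma F_zzz : F 0 0 0 = Real.sqrt π := by
  unfold F
  rw [if_pos ⟨⟨0, rfl⟩, le_refl _, le_refl _, le_refl _⟩]
  simp

lemma II_eq_F (m n ℓ : ℕ) : II m n ℓ = F m n ℓ := by
  suffices h : ∀ N m n ℓ : ℕ, m + n + ℓ ≤ N → II m n ℓ = F m n ℓ from h (m+n+ℓ) m n ℓ le_rfl
  intro N
  induction N using Nat.strong_induction_on with
  | _ N ih =>
    have hsucc : ∀ m n ℓ : ℕ, m + 1 + n + ℓ ≤ N → II (m+1) n ℓ = F (m+1) n ℓ := by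
      intro m n ℓ hle
      rw [II_rec, F_rec]
      have h1 : II m (n-1) ℓ = F m (n-1) ℓ :=
        ih (m + (n-1) + ℓ) (by omega) m (n-1) ℓ le_rfl
      have h2 : II m n (ℓ-1) = F m n (ℓ-1) :=
        ih (m + n + (ℓ-1)) (by omega) m n (ℓ-1) le_rfl
      rw [h1, h2]
    intro m n ℓ hle
    match m, n, ℓ with
    | 0, 0, 0 => rw [II_zero, F_zzz]
    | m+1, n, ℓ => exact hsucc m n ℓ hle
    | 0, n+1, ℓ =>
      rw [II_comm12, F_comm12]
      exact hsucc n 0 ℓ (by omega)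
    | 0, 0, ℓ+1 =>
      rw [II_comm13, F_comm13]
      exact hsucc ℓ 0 0 (by omega)

lemma A_eq (m n ℓ : ℕ) :
    A m n ℓ = 2 * (hermiteCoeff m * hermiteCoeff n * hermiteCoeff ℓ) * II m n ℓ := by
  unfold A II J
  have key : ∀ y : ℝ, h m y * h n y * h ℓ y * Real.exp (-y ^ 2 / 4)
      = (hermiteCoeff m * hermiteCoeff n * hermiteCoeff ℓ) *
        ((P m * P n * P ℓ).eval (y/2) * Real.exp (-(y/2) ^ 2)) := by
    intro y
    simp only [h, physHermite_eq, Polynomial.eval_mul]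
    rw [show -(y/2)^2 = -y^2/4 by ring]
    ring
  simp_rw [key]
  rw [MeasureTheory.integral_const_mul]
  have := MeasureTheory.Measure.integral_comp_div
    (fun x : ℝ => (P m * P n * P ℓ).eval x * Real.exp (-x ^ 2)) 2
  rw [this]
  simp
  ring


end HermiteAux

/-- `A_{m,n,ℓ} = 0` unless `m + n + ℓ` is even and the triangle inequalities hold, in which
case `A_{m,n,ℓ} = (4π)^{−1/4}(m!n!ℓ!)^{1/2}(((m+n−ℓ)/2)!((n+ℓ−m)/2)!((m+ℓ−n)/2)!)^{−1}`. -/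
theorem hermite_triple_product (m n ℓ : ℕ) :
    (¬(Even (m + n + ℓ) ∧ n ≤ m + ℓ ∧ m ≤ n + ℓ ∧ ℓ ≤ m + n) → A m n ℓ = 0) ∧
    ((Even (m + n + ℓ) ∧ n ≤ m + ℓ ∧ m ≤ n + ℓ ∧ ℓ ≤ m + n) →
      A m n ℓ = (4 * π) ^ (-(1 / 4 : ℝ)) *
        ((m.factorial * n.factorial * ℓ.factorial : ℕ) : ℝ) ^ ((1 / 2 : ℝ)) *
        (((((m + n - ℓ) / 2).factorial * ((n + ℓ - m) / 2).factorial *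
            ((m + ℓ - n) / 2).factorial : ℕ) : ℝ))⁻¹) := by
  constructor
  · intro hnot
    rw [A_eq, II_eq_F, F_not _ _ _ hnot]
    ring
  · intro hC
    obtain ⟨a, b, c, hm, hn, hl⟩ := (cond_iff _ _ _).1 hC
    subst hm hn hl
    rw [A_eq, II_eq_F, F_of_abc]
    rw [show (b + c + (a + c) - (a + b)) / 2 = c by omega,
      show (a + c + (a + b) - (b + c)) / 2 = a by omega,
      show (b + c + (a + b) - (a + c)) / 2 = b by omega]
    unfold hermiteCoeff
    -- abbreviations
    set e4 := (4 * π) ^ (-(1 / 4 : ℝ)) with he4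
    set X := ((b + c).factorial : ℝ) with hX
    set Y := ((a + c).factorial : ℝ) with hY
    set Z := ((a + b).factorial : ℝ) with hZ
    have hXpos : 0 < X := by rw [hX]; exact_mod_cast (b+c).factorial_pos
    have hYpos : 0 < Y := by rw [hY]; exact_mod_cast (a+c).factorial_pos
    have hZpos : 0 < Z := by rw [hZ]; exact_mod_cast (a+b).factorial_pos
    set u := Real.sqrt X with hu
    set v := Real.sqrt Y with hv
    set w := Real.sqrt Z with hw
    have hupos : 0 < u := Real.sqrt_pos.2 hXpos
    have hvpos : 0 < v := Real.sqrt_pos.2 hYpos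
    have hwpos : 0 < w := Real.sqrt_pos.2 hZpos
    have hXu : X = u * u := (Real.mul_self_sqrt hXpos.le).symm
    have hYv : Y = v * v := (Real.mul_self_sqrt hYpos.le).symm
    have hZw : Z = w * w := (Real.mul_self_sqrt hZpos.le).symm
    have hXhalf : X ^ (-(1/2 : ℝ)) = u⁻¹ := by
      rw [Real.rpow_neg hXpos.le, ← Real.sqrt_eq_rpow]
    have hYhalf : Y ^ (-(1/2 : ℝ)) = v⁻¹ := by
      rw [Real.rpow_neg hYpos.le, ← Real.sqrt_eq_rpow]
    have hZhalf : Z ^ (-(1/2 : ℝ)) = w⁻¹ := by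
      rw [Real.rpow_neg hZpos.le, ← Real.sqrt_eq_rpow]
    have hXYZ : ((X * Y * Z) : ℝ) ^ ((1/2 : ℝ)) = u * v * w := by
      rw [Real.mul_rpow (by positivity) hZpos.le, Real.mul_rpow hXpos.le hYpos.le,
        ← Real.sqrt_eq_rpow, ← Real.sqrt_eq_rpow, ← Real.sqrt_eq_rpow]
    have hpi4 : (0:ℝ) < 4 * π := by positivity
    have key1 : 2 * e4 * e4 * e4 * Real.sqrt π = e4 := by
      have h4 : (4 * π) ^ ((1/2 : ℝ)) = 2 * Real.sqrt π := by
        rw [show (4:ℝ) * π = (2 * Real.sqrt π)^2 by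
            rw [mul_pow, Real.sq_sqrt pi_pos.le]; ring,
          ← Real.rpow_natCast (2 * Real.sqrt π) 2, ← Real.rpow_mul (by positivity)]
        norm_num
      calc 2 * e4 * e4 * e4 * Real.sqrt π = e4 * e4 * (2 * Real.sqrt π) * e4 := by ring
        _ = e4 * e4 * (4 * π) ^ ((1/2 : ℝ)) * e4 := by rw [h4]
        _ = (4 * π) ^ (-(1/4 : ℝ) + -(1/4 : ℝ) + (1/2 : ℝ)) * e4 := by
            rw [he4, ← Real.rpow_add hpi4, ← Real.rpow_add hpi4]
        _ = e4 := by norm_num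
    have key2 : (2:ℝ) ^ (-((b+c : ℕ) : ℝ) / 2) * (2:ℝ) ^ (-((a+c : ℕ) : ℝ) / 2) *
        (2:ℝ) ^ (-((a+b : ℕ) : ℝ) / 2) * (2:ℝ) ^ (a + b + c : ℕ) = 1 := by
      rw [← Real.rpow_natCast 2 (a+b+c), ← Real.rpow_add two_pos, ← Real.rpow_add two_pos,
        ← Real.rpow_add two_pos]
      rw [show -((b+c : ℕ) : ℝ) / 2 + -((a+c : ℕ) : ℝ) / 2 + -((a+b : ℕ) : ℝ) / 2
          + ((a + b + c : ℕ) : ℝ) = 0 by push_cast; ring]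
      exact Real.rpow_zero 2
    have hDen : ((a.factorial * b.factorial * c.factorial : ℕ) : ℝ)
        = (a.factorial : ℝ) * (b.factorial : ℝ) * (c.factorial : ℝ) := by push_cast; ring
    have hDen2 : ((c.factorial * a.factorial * b.factorial : ℕ) : ℝ)
        = (a.factorial : ℝ) * (b.factorial : ℝ) * (c.factorial : ℝ) := by push_cast; ring
    have hNum : (((b+c).factorial * (a+c).factorial * (a+b).factorial : ℕ) : ℝ) = X * Y * Z := by
      rw [hX, hY, hZ]; push_cast; ring
    rw [hDen, hDen2, hNum, hXYZ, hXu, hYv, hZw]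
    have e1 : u⁻¹ * (u * u) = u := by field_simp
    have e2 : v⁻¹ * (v * v) = v := by field_simp
    have e3 : w⁻¹ * (w * w) = w := by field_simp
    calc 2 * ((2:ℝ) ^ (-((b+c : ℕ) : ℝ) / 2) * e4 * (u*u) ^ (-(1/2 : ℝ)) *
            ((2:ℝ) ^ (-((a+c : ℕ) : ℝ) / 2) * e4 * (v*v) ^ (-(1/2 : ℝ))) *
            ((2:ℝ) ^ (-((a+b : ℕ) : ℝ) / 2) * e4 * (w*w) ^ (-(1/2 : ℝ)))) *
          (2 ^ (a + b + c) * Real.sqrt π * (u * u * (v * v) * (w * w)) /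
            ((a.factorial : ℝ) * (b.factorial : ℝ) * (c.factorial : ℝ)))
        = (2 * e4 * e4 * e4 * Real.sqrt π) *
          ((2:ℝ) ^ (-((b+c : ℕ) : ℝ) / 2) * (2:ℝ) ^ (-((a+c : ℕ) : ℝ) / 2) *
            (2:ℝ) ^ (-((a+b : ℕ) : ℝ) / 2) * (2:ℝ) ^ (a + b + c : ℕ)) *
          ((u*u) ^ (-(1/2 : ℝ)) * (u * u)) * ((v*v) ^ (-(1/2 : ℝ)) * (v * v)) *
          ((w*w) ^ (-(1/2 : ℝ)) * (w * w)) *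
          ((a.factorial : ℝ) * (b.factorial : ℝ) * (c.factorial : ℝ))⁻¹ := by
          rw [div_eq_mul_inv]; ring
      _ = e4 * (u * v * w) * ((a.factorial : ℝ) * (b.factorial : ℝ) * (c.factorial : ℝ))⁻¹ := by
          rw [key1, key2, ← hXu, ← hYv, ← hZw, hXhalf, hYhalf, hZhalf, hXu, hYv, hZw,
            e1, e2, e3]
          ring
end

section
/- Let γ > 0, δ > 0, C ≥ 0, T > 0, and let ε : [T, ∞) → [0, ∞) satisfy ε(t) → 0 as t → ∞. Let λ : [T, ∞) → ℝ be C¹ with λ(t) → 0 as t → ∞ and |λ'(t) + γ·λ(t)²| ≤ ε(t)·λ(t)² + C·e^{−δt} for all t ≥ T. Then either t·λ(t) → 1/γ as t → ∞, or t·λ(t) → 0 as t → ∞. -/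
open Real Filter

lemma exp_neg_mul_tendsto {c : ℝ} (hc : 0 < c) :
    Tendsto (fun x : ℝ => Real.exp (-(c * x))) atTop (nhds 0) :=
  Real.tendsto_exp_atBot.comp (tendsto_neg_atBot_iff.mpr (Tendsto.const_mul_atTop hc tendsto_id))

lemma mul_exp_neg_mul_tendsto {c K : ℝ} (hc : 0 < c) :
    Tendsto (fun x : ℝ => K * x * Real.exp (-(c * x))) atTop (nhds 0) := by
  have h1 := (Real.tendsto_pow_mul_exp_neg_atTop_nhds_zero 1).comp
    (Tendsto.const_mul_atTop hc (tendsto_id (α := ℝ)))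
  have h2 := h1.const_mul (K / c)
  rw [mul_zero] at h2
  refine h2.congr (fun x => ?_)
  simp only [Function.comp, pow_one, id]
  field_simp

set_option maxHeartbeats 1000000 in
/-- Scalar perturbed Riccati dichotomy: if `λ(t) → 0` and
`|λ'(t) + γλ(t)²| ≤ ε(t)λ(t)² + Ce^{−δt}` with `ε(t) → 0`, then either `t·λ(t) → 1/γ`
or `t·λ(t) → 0` as `t → ∞`. -/
theorem scalar_riccati_dichotomy (γ δ C T : ℝ) (hγ : 0 < γ) (hδ : 0 < δ) (hC : 0 ≤ C)
    (hT : 0 < T) (ε : ℝ → ℝ) (hε0 : ∀ t, T ≤ t → 0 ≤ ε t) (hε : Tendsto ε atTop (nhds 0))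
    (lam lam' : ℝ → ℝ)
    (hderiv : ∀ t, T ≤ t → HasDerivAt lam (lam' t) t)
    (hlim : Tendsto lam atTop (nhds 0))
    (hric : ∀ t, T ≤ t → |lam' t + γ * lam t ^ 2| ≤ ε t * lam t ^ 2 + C * Real.exp (-δ * t)) :
    Tendsto (fun t => t * lam t) atTop (nhds (1 / γ)) ∨
    Tendsto (fun t => t * lam t) atTop (nhds 0) := by
  set K : ℝ := max 1 (Real.sqrt (2 * (C + 1) / γ)) with hKdef
  have hK1 : (1 : ℝ) ≤ K := le_max_left _ _
  have hK0 : (0 : ℝ) < K := lt_of_lt_of_le one_pos hK1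
  have hKsq : 2 * (C + 1) / γ ≤ K ^ 2 := by
    have h0 : (0:ℝ) ≤ 2 * (C + 1) / γ := by positivity
    calc 2 * (C + 1) / γ = (Real.sqrt (2 * (C + 1) / γ)) ^ 2 := (Real.sq_sqrt h0).symm
      _ ≤ K ^ 2 := by
        have := le_max_right 1 (Real.sqrt (2 * (C + 1) / γ))
        nlinarith [Real.sqrt_nonneg (2 * (C + 1) / γ)]
  have hKC : C + 1 ≤ γ / 2 * K ^ 2 := by
    rw [div_le_iff₀ hγ] at hKsq; nlinarith
  -- the boundary smallness function
  set g : ℝ → ℝ := fun x => 3 * γ / 2 * K * Real.exp (-(δ / 4 * x))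
      + C / K * Real.exp (-(3 * δ / 4 * x)) with hgdef
  have hg : Tendsto g atTop (nhds 0) := by
    have h1 := (exp_neg_mul_tendsto (by positivity : (0:ℝ) < δ / 4)).const_mul (3 * γ / 2 * K)
    have h2 := (exp_neg_mul_tendsto (by positivity : (0:ℝ) < 3 * δ / 4)).const_mul (C / K)
    simpa using h1.add h2
  -- choose threshold t₁
  have hev : ∀ᶠ t in atTop, ε t ≤ γ / 2 ∧ g t < δ / 4 :=
    (hε.eventually_le_const (half_pos hγ)).and (hg.eventually_lt_const (by positivity))
  rw [eventually_atTop] at hev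
  obtain ⟨t₁', ht₁'⟩ := hev
  set t₁ : ℝ := max t₁' (max T 1) with ht₁def
  have ht₁T : T ≤ t₁ := le_trans (le_max_left _ _) (le_max_right _ _)
  have ht₁1 : (1:ℝ) ≤ t₁ := le_trans (le_max_right _ _) (le_max_right _ _)
  have hεt : ∀ t, t₁ ≤ t → ε t ≤ γ / 2 := fun t ht => (ht₁' t (le_trans (le_max_left _ _) ht)).1
  have hgt : ∀ t, t₁ ≤ t → g t < δ / 4 := fun t ht => (ht₁' t (le_trans (le_max_left _ _) ht)).2
  have hTt : ∀ t, t₁ ≤ t → T ≤ t := fun t ht => le_trans ht₁T ht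
  -- continuity of lam past T
  have hcont : ∀ a b : ℝ, T ≤ a → ContinuousOn lam (Set.Icc a b) := fun a b ha =>
    fun x hx => (hderiv x (le_trans ha hx.1)).continuousAt.continuousWithinAt
  -- Step 1: lower barrier
  have lowbd : ∀ t, t₁ ≤ t → -(K * Real.exp (-(δ / 2 * t))) < lam t := by
    intro t₀ ht₀
    by_contra hcon
    push_neg at hcon
    have hneg : lam t₀ < 0 := lt_of_le_of_lt hcon (neg_lt_zero.mpr (by positivity))
    have claim : ∀ x, t₀ ≤ x → lam x ≤ lam t₀ := by
      intro b hb
      have := image_le_of_deriv_right_lt_deriv_boundary (f := lam) (f' := lam')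
        (a := t₀) (b := b) (B := fun _ => lam t₀) (B' := fun _ => 0)
        (hcont t₀ b (hTt t₀ ht₀))
        (fun x hx => (hderiv x (le_trans (hTt t₀ ht₀) hx.1)).hasDerivWithinAt)
        le_rfl (fun x => hasDerivAt_const x _) ?_ ⟨hb, le_rfl⟩
      · exact this
      · intro x hx hcontact
        -- show lam' x < 0 at contact points
        have hxT : T ≤ x := le_trans (hTt t₀ ht₀) hx.1
        have hεx : ε x ≤ γ / 2 := hεt x (le_trans ht₀ hx.1)
        have hrx := (abs_le.mp (hric x hxT)).2
        have hsq : K ^ 2 * Real.exp (-(δ * t₀)) ≤ lam x ^ 2 := by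
          rw [hcontact]
          have h1 : K * Real.exp (-(δ / 2 * t₀)) ≤ -lam t₀ := by linarith
          have h2 : (0:ℝ) < K * Real.exp (-(δ / 2 * t₀)) := by positivity
          have := mul_self_le_mul_self (le_of_lt h2) h1
          have hexp : Real.exp (-(δ / 2 * t₀)) * Real.exp (-(δ / 2 * t₀))
              = Real.exp (-(δ * t₀)) := by rw [← Real.exp_add]; congr 1; ring
          nlinarith
        have hex : Real.exp (-δ * x) ≤ Real.exp (-(δ * t₀)) := by
          apply Real.exp_le_exp.mpr
          nlinarith [mul_le_mul_of_nonneg_left hx.1 hδ.le]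
        have hCP : C * Real.exp (-δ * x) ≤ C * Real.exp (-(δ * t₀)) :=
          mul_le_mul_of_nonneg_left hex hC
        have hsq0 : (0:ℝ) ≤ lam x ^ 2 := sq_nonneg _
        have hA : lam' x ≤ -(γ / 2) * lam x ^ 2 + C * Real.exp (-(δ * t₀)) := by
          nlinarith [mul_nonneg (by linarith : (0:ℝ) ≤ γ / 2 - ε x) (sq_nonneg (lam x))]
        have hB : (C + 1) * Real.exp (-(δ * t₀)) ≤ γ / 2 * lam x ^ 2 := by
          have h1 : γ / 2 * (K ^ 2 * Real.exp (-(δ * t₀))) ≤ γ / 2 * lam x ^ 2 :=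
            mul_le_mul_of_nonneg_left hsq (by positivity)
          have h2 : (C + 1) * Real.exp (-(δ * t₀)) ≤ γ / 2 * K ^ 2 * Real.exp (-(δ * t₀)) :=
            mul_le_mul_of_nonneg_right hKC (Real.exp_pos _).le
          nlinarith
        have hfinal : lam' x < 0 := by nlinarith [Real.exp_pos (-(δ * t₀))]
        simpa using hfinal
    -- contradiction with lam → 0
    obtain ⟨N, hN⟩ := eventually_atTop.mp (hlim.eventually_const_lt hneg)
    have h1 := hN (max t₀ N) (le_max_right _ _)
    have h2 := claim (max t₀ N) (le_max_left _ _)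
    linarith
  -- dichotomy case split
  by_cases hcase : ∃ t₀, t₁ ≤ t₀ ∧ K * Real.exp (-(δ / 4 * t₀)) ≤ lam t₀
  · -- Riccati regime : t·λ → 1/γ
    left
    obtain ⟨t₀, ht₀1, ht₀lam⟩ := hcase
    have ht₀T : T ≤ t₀ := hTt t₀ ht₀1
    -- the barrier function and its derivative
    have hfd : ∀ x : ℝ, HasDerivAt (fun x => K * Real.exp (-(δ / 4 * x)))
        (K * (Real.exp (-(δ / 4 * x)) * -(δ / 4))) x := by
      intro x
      have hin : HasDerivAt (fun x : ℝ => -(δ / 4 * x)) (-(δ / 4)) x := by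
        simpa [neg_mul] using (hasDerivAt_id x).const_mul (-(δ / 4))
      exact ((Real.hasDerivAt_exp (-(δ / 4 * x))).comp x hin).const_mul K
    -- forward invariance of the region above the barrier
    have key : ∀ t, t₀ ≤ t → K * Real.exp (-(δ / 4 * t)) ≤ lam t := by
      intro b hb
      refine image_le_of_deriv_right_lt_deriv_boundary'
        (f := fun x => K * Real.exp (-(δ / 4 * x)))
        (f' := fun x => K * (Real.exp (-(δ / 4 * x)) * -(δ / 4)))
        (a := t₀) (b := b) (B := lam) (B' := lam')
        (fun x _ => (hfd x).continuousAt.continuousWithinAt)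
        (fun x _ => (hfd x).hasDerivWithinAt)
        ht₀lam (hcont t₀ b ht₀T)
        (fun x hx => (hderiv x (le_trans ht₀T hx.1)).hasDerivWithinAt)
        ?_ ⟨hb, le_rfl⟩
      intro x hx hcontact
      have hxT : T ≤ x := le_trans ht₀T hx.1
      have hx1 : t₁ ≤ x := le_trans ht₀1 hx.1
      have hεx : ε x ≤ γ / 2 := hεt x hx1
      have hgx : g x < δ / 4 := hgt x hx1
      have hrl := (abs_le.mp (hric x hxT)).1
      have hKne : K ≠ 0 := ne_of_gt hK0
      have hE2 : Real.exp (-(δ / 4 * x)) * Real.exp (-(δ / 4 * x)) = Real.exp (-(δ / 2 * x)) := by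
        rw [← Real.exp_add]; congr 1; ring
      have hE3 : Real.exp (-(3 * δ / 4 * x)) * Real.exp (-(δ / 4 * x)) = Real.exp (-δ * x) := by
        rw [← Real.exp_add]; congr 1; ring
      have hlsq : lam x ^ 2 = K ^ 2 * Real.exp (-(δ / 2 * x)) := by
        rw [← hcontact]; rw [← hE2]; ring
      have hlam' : -(3 * γ / 2) * lam x ^ 2 - C * Real.exp (-δ * x) ≤ lam' x := by
        nlinarith [mul_nonneg (by linarith : (0:ℝ) ≤ γ / 2 - ε x) (sq_nonneg (lam x))]
      have hmul := mul_lt_mul_of_pos_right hgx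
        (by positivity : (0:ℝ) < K * Real.exp (-(δ / 4 * x)))
      have h2 : C / K * Real.exp (-(3 * δ / 4 * x)) * (K * Real.exp (-(δ / 4 * x)))
          = C * Real.exp (-δ * x) := by
        rw [← hE3]; field_simp
      have h1 : 3 * γ / 2 * K * Real.exp (-(δ / 4 * x)) * (K * Real.exp (-(δ / 4 * x)))
          = 3 * γ / 2 * K ^ 2 * Real.exp (-(δ / 2 * x)) := by
        rw [← hE2]; ring
      have hgKE : g x * (K * Real.exp (-(δ / 4 * x)))
          = 3 * γ / 2 * K ^ 2 * Real.exp (-(δ / 2 * x)) + C * Real.exp (-δ * x) := by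
        rw [hgdef]; simp only; rw [add_mul, h1, h2]
      rw [hgKE] at hmul
      have hsub : -(3 * γ / 2) * lam x ^ 2
          = -(3 * γ / 2) * (K ^ 2 * Real.exp (-(δ / 2 * x))) := by rw [hlsq]
      show K * (Real.exp (-(δ / 4 * x)) * -(δ / 4)) < lam' x
      nlinarith [hlam', hsub, hmul]
    have hpos : ∀ t, t₀ ≤ t → 0 < lam t := fun t ht =>
      lt_of_lt_of_le (by positivity) (key t ht)
    -- pass to μ = 1/λ
    set μ : ℝ → ℝ := fun t => (lam t)⁻¹ with hμdef
    have hμd : ∀ t, t₀ ≤ t → HasDerivAt μ (-(lam' t) / lam t ^ 2) t := fun t ht =>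
      (hderiv t (le_trans ht₀T ht)).inv (hpos t ht).ne'
    set ρ : ℝ → ℝ := fun t => ε t + C / K ^ 2 * Real.exp (-(δ / 2 * t)) with hρdef
    have hρ0 : Tendsto ρ atTop (nhds 0) := by
      have h2 := (exp_neg_mul_tendsto (by positivity : (0:ℝ) < δ / 2)).const_mul (C / K ^ 2)
      simpa using hε.add h2
    have hρb : ∀ t, t₀ ≤ t → |(-(lam' t) / lam t ^ 2) - γ| ≤ ρ t := by
      intro t ht
      have hlpos := hpos t ht
      have hlsq : (0:ℝ) < lam t ^ 2 := by positivity
      have hkey := key t ht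
      have hE2 : Real.exp (-(δ / 2 * t)) * Real.exp (-(δ / 2 * t)) = Real.exp (-δ * t) := by
        rw [← Real.exp_add]; congr 1; ring
      have hllb : K ^ 2 * Real.exp (-(δ / 2 * t)) ≤ lam t ^ 2 := by
        have := mul_le_mul_of_nonneg_left hkey (by positivity : (0:ℝ) ≤ K * Real.exp (-(δ / 4 * t)))
        have hE4 : Real.exp (-(δ / 4 * t)) * Real.exp (-(δ / 4 * t)) = Real.exp (-(δ / 2 * t)) := by
          rw [← Real.exp_add]; congr 1; ring
        nlinarith [hpos t ht]
      have heq : (-(lam' t) / lam t ^ 2) - γ = -((lam' t + γ * lam t ^ 2) / lam t ^ 2) := by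
        field_simp; ring
      rw [heq, abs_neg, abs_div, abs_of_pos hlsq]
      rw [div_le_iff₀ hlsq]
      have hr := hric t (le_trans ht₀T ht)
      have hlast : C * Real.exp (-δ * t) ≤ C / K ^ 2 * Real.exp (-(δ / 2 * t)) * lam t ^ 2 := by
        rw [← hE2]
        have h5 : C / K ^ 2 * Real.exp (-(δ / 2 * t)) * (K ^ 2 * Real.exp (-(δ / 2 * t)))
            = C * (Real.exp (-(δ / 2 * t)) * Real.exp (-(δ / 2 * t))) := by
          field_simp
        nlinarith [mul_le_mul_of_nonneg_left hllb
          (by positivity : (0:ℝ) ≤ C / K ^ 2 * Real.exp (-(δ / 2 * t)))]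
      have hεnn : 0 ≤ ε t := hε0 t (le_trans ht₀T ht)
      rw [hρdef]
      simp only
      nlinarith
    -- μ t / t → γ
    have hμlim : Tendsto (fun t => μ t / t) atTop (nhds γ) := by
      rw [Metric.tendsto_atTop]
      intro η hη
      have hev2 : ∀ᶠ x in atTop, ρ x < η / 4 ∧ t₀ ≤ x :=
        (hρ0.eventually_lt_const (by positivity)).and (eventually_ge_atTop t₀)
      rw [eventually_atTop] at hev2
      obtain ⟨s', hs'⟩ := hev2
      set s : ℝ := max s' t₀ with hsdef
      have hss' : s' ≤ s := le_max_left _ _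
      have hst₀ : t₀ ≤ s := le_max_right _ _
      have hsb : ∀ x, s ≤ x → ρ x < η / 4 ∧ t₀ ≤ x := fun x hx => hs' x (le_trans hss' hx)
      have hlip : ∀ t ∈ Set.Ici s, ‖(μ t - γ * t) - (μ s - γ * s)‖ ≤ η / 4 * ‖t - s‖ := by
        intro t ht
        refine Convex.norm_image_sub_le_of_norm_hasDerivWithin_le (s := Set.Ici s)
          (f := fun x => μ x - γ * x) (f' := fun x => -(lam' x) / lam x ^ 2 - γ)
          (fun x hx => (((hμd x (hsb x hx).2).sub
            (by simpa using (hasDerivAt_id x).const_mul γ)).hasDerivWithinAt))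
          (fun x hx => ?_) (convex_Ici s) Set.self_mem_Ici ht
        rw [Real.norm_eq_abs]
        exact le_of_lt (lt_of_le_of_lt (hρb x (hsb x hx).2) (hsb x hx).1)
      set M : ℝ := |μ s - γ * s| with hMdef
      refine ⟨max s (max 1 (4 * (M + 1) / η)), fun t ht => ?_⟩
      have hts : s ≤ t := le_trans (le_max_left _ _) ht
      have ht1 : (1:ℝ) ≤ t := le_trans (le_trans (le_max_left _ _) (le_max_right _ _)) ht
      have htM : 4 * (M + 1) / η ≤ t := le_trans (le_trans (le_max_right _ _) (le_max_right _ _)) ht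
      have htpos : (0:ℝ) < t := lt_of_lt_of_le one_pos ht1
      have h6 := hlip t hts
      rw [Real.norm_eq_abs, Real.norm_eq_abs, abs_of_nonneg (by linarith : (0:ℝ) ≤ t - s)] at h6
      have h7 : |μ t - γ * t| ≤ M + η / 4 * t := by
        have := abs_sub_abs_le_abs_sub (μ t - γ * t) (μ s - γ * s)
        have hsnn : 0 ≤ s := le_trans (le_trans zero_le_one ht₁1) (le_trans ht₀1 hst₀)
        nlinarith [abs_nonneg (μ s - γ * s)]
      have hMt : M ≤ η / 4 * t := by
        rw [div_le_iff₀ hη] at htM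
        nlinarith [abs_nonneg (μ s - γ * s)]
      have h8 : dist (μ t / t) γ = |μ t - γ * t| / t := by
        rw [Real.dist_eq]
        have heq9 : μ t / t - γ = (μ t - γ * t) / t := by field_simp
        rw [heq9, abs_div, abs_of_pos htpos]
      rw [h8, div_lt_iff₀ htpos]
      nlinarith
    -- conclude
    have h2 := hμlim.inv₀ (ne_of_gt hγ)
    rw [one_div]
    refine h2.congr' ?_
    filter_upwards [eventually_ge_atTop (max t₀ 1)] with t ht
    have ht₀' : t₀ ≤ t := le_trans (le_max_left _ _) ht
    have ht1 : (1:ℝ) ≤ t := le_trans (le_max_right _ _) ht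
    have hlpos2 := hpos t ht₀'
    rw [hμdef]
    simp only
    rw [inv_div, div_eq_mul_inv, inv_inv]
  · -- decay regime : t·λ → 0
    right
    push_neg at hcase
    refine squeeze_zero_norm' (a := fun t => K * t * Real.exp (-(δ / 4 * t))) ?_
      (mul_exp_neg_mul_tendsto (by positivity : (0:ℝ) < δ / 4))
    · filter_upwards [eventually_ge_atTop t₁] with t ht
      have ht0 : (0:ℝ) ≤ t := le_trans (le_trans zero_le_one ht₁1) ht
      have hup : lam t < K * Real.exp (-(δ / 4 * t)) := hcase t ht
      have hlo := lowbd t ht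
      have hmon : Real.exp (-(δ / 2 * t)) ≤ Real.exp (-(δ / 4 * t)) := by
        apply Real.exp_le_exp.mpr
        nlinarith
      have habs : |lam t| ≤ K * Real.exp (-(δ / 4 * t)) := by
        rw [abs_le]
        constructor
        · nlinarith
        · linarith
      rw [Real.norm_eq_abs, abs_mul, abs_of_nonneg ht0]
      calc t * |lam t| ≤ t * (K * Real.exp (-(δ / 4 * t))) := by
            exact mul_le_mul_of_nonneg_left habs ht0
        _ = K * t * Real.exp (-(δ / 4 * t)) := by ring
end

section
/- Let u, φ : ℝ → ℝ be C² functions and let c < d be reals with φ'(x) ≠ 0 for every x ∈ [c, d]. Then for Lebesgue-almost every s ∈ ℝ, every point x ∈ [c, d] with u'(x) + s·φ'(x) = 0 satisfies u''(x) + s·φ''(x) ≠ 0; consequently, for almost every s ∈ ℝ, the function u + s·φ has only finitely many critical points in [c, d]. -/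
open MeasureTheory

private lemma cd_deriv {f : ℝ → ℝ} (hf : ContDiff ℝ 2 f) :
    ContDiff ℝ 1 (deriv f) := by
  have : ContDiff ℝ (1 + 1) f := by norm_num; exact hf
  exact (contDiff_succ_iff_deriv.mp this).2.2

/-- Sard-type perturbation lemma: if `u, φ : ℝ → ℝ` are `C²`, `c < d`, and `φ' ≠ 0` on
`[c,d]`, then for Lebesgue-a.e. `s ∈ ℝ`, every critical point of `u + s·φ` in `[c,d]` is
nondegenerate; consequently, for a.e. `s`, `u + s·φ` has only finitely many critical points
in `[c,d]`. -/
theorem sard_type_perturbation (u φ : ℝ → ℝ) (hu : ContDiff ℝ 2 u) (hφ : ContDiff ℝ 2 φ)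
    (c d : ℝ) (hcd : c < d) (hφ' : ∀ x ∈ Set.Icc c d, deriv φ x ≠ 0) :
    ∀ᵐ s : ℝ ∂volume,
      (∀ x ∈ Set.Icc c d, deriv u x + s * deriv φ x = 0 →
        deriv (deriv u) x + s * deriv (deriv φ) x ≠ 0) ∧
      {x ∈ Set.Icc c d | deriv u x + s * deriv φ x = 0}.Finite := by
  have hu1 : ContDiff ℝ 1 (deriv u) := cd_deriv hu
  have hφ1 : ContDiff ℝ 1 (deriv φ) := cd_deriv hφ
  have hdu : ∀ x : ℝ, HasDerivAt (deriv u) (deriv (deriv u) x) x :=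
    fun x => ((hu1.differentiable one_ne_zero) x).hasDerivAt
  have hdφ : ∀ x : ℝ, HasDerivAt (deriv φ) (deriv (deriv φ) x) x :=
    fun x => ((hφ1.differentiable one_ne_zero) x).hasDerivAt
  set g : ℝ → ℝ := fun x => -(deriv u x / deriv φ x) with hg
  set S : Set ℝ :=
    {x ∈ Set.Icc c d |
      deriv (deriv u) x * deriv φ x - deriv u x * deriv (deriv φ) x = 0} with hS
  set B : Set ℝ :=
    {s : ℝ | ∃ x ∈ Set.Icc c d, deriv u x + s * deriv φ x = 0 ∧
      deriv (deriv u) x + s * deriv (deriv φ) x = 0} with hB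
  -- every "bad" parameter is a critical value of g on S
  have hsub : B ⊆ g '' S := by
    rintro s ⟨x, hx, h0, h1⟩
    have hφx := hφ' x hx
    refine ⟨x, ⟨hx, ?_⟩, ?_⟩
    · have hs : s * deriv φ x = -deriv u x := by linarith
      have : deriv φ x * (deriv (deriv u) x + s * deriv (deriv φ) x) = 0 := by
        rw [h1]; ring
      linear_combination this - deriv (deriv φ) x * hs
    · show -(deriv u x / deriv φ x) = s
      rw [neg_eq_iff_eq_neg, div_eq_iff hφx]
      linear_combination h0
  -- g has zero derivative on S, so g '' S is null by Sard
  have himg : volume (g '' S) = 0 := by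
    apply addHaar_image_eq_zero_of_det_fderivWithin_eq_zero volume
      (f' := fun _ => (0 : ℝ →L[ℝ] ℝ))
    · intro x hx
      have hφx := hφ' x hx.1
      have hder : HasDerivAt g
          (-((deriv (deriv u) x * deriv φ x - deriv u x * deriv (deriv φ) x)
            / (deriv φ x) ^ 2)) x := ((hdu x).div (hdφ x) hφx).neg
      rw [hx.2] at hder
      simp only [zero_div, neg_zero] at hder
      have h2 := hder.hasFDerivAt.hasFDerivWithinAt (s := S)
      have e : (ContinuousLinearMap.toSpanSingleton ℝ (0 : ℝ)) = 0 := by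
        ext; simp
      rwa [e] at h2
    · intro x _
      simp [ContinuousLinearMap.det]
  have hBnull : volume B = 0 := measure_mono_null hsub himg
  have hae : ∀ᵐ s : ℝ ∂volume, s ∉ B := (measure_eq_zero_iff_ae_notMem (μ := volume)).mp hBnull
  filter_upwards [hae] with s hs
  have hnd : ∀ x ∈ Set.Icc c d, deriv u x + s * deriv φ x = 0 →
      deriv (deriv u) x + s * deriv (deriv φ) x ≠ 0 := by
    intro x hx h0 h1
    exact hs ⟨x, hx, h0, h1⟩
  refine ⟨hnd, ?_⟩
  -- finiteness: all critical points are nondegenerate hence isolated, and [c,d] is compact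
  by_contra hinf
  set f : ℝ → ℝ := fun x => deriv u x + s * deriv φ x with hf
  have hfc : Continuous f :=
    (hu1.continuous).add (continuous_const.mul hφ1.continuous)
  set Z : Set ℝ := {x ∈ Set.Icc c d | deriv u x + s * deriv φ x = 0} with hZ
  have hZinf : Z.Infinite := hinf
  obtain ⟨x₀, hx₀K, hacc⟩ :=
    hZinf.exists_accPt_of_subset_isCompact isCompact_Icc (Set.sep_subset _ _)
  have hZclosed : IsClosed Z := by
    have : Z = Set.Icc c d ∩ f ⁻¹' {0} := by
      ext y; simp [hZ, hf, Set.mem_inter_iff, and_comm]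
    rw [this]
    exact isClosed_Icc.inter (isClosed_singleton.preimage hfc)
  have hx₀Z : x₀ ∈ Z :=
    hZclosed.closure_subset (mem_closure_iff_clusterPt.mpr hacc.clusterPt)
  have hfx₀ : f x₀ = 0 := hx₀Z.2
  have hf' : deriv (deriv u) x₀ + s * deriv (deriv φ) x₀ ≠ 0 :=
    hnd x₀ hx₀Z.1 hx₀Z.2
  have hder : HasDerivAt f (deriv (deriv u) x₀ + s * deriv (deriv φ) x₀) x₀ :=
    (hdu x₀).add ((hdφ x₀).const_mul s)
  have hslope : Filter.Tendsto (slope f x₀) (nhdsWithin x₀ {x₀}ᶜ)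
      (nhds (deriv (deriv u) x₀ + s * deriv (deriv φ) x₀)) :=
    hasDerivAt_iff_tendsto_slope.mp hder
  have hev : ∀ᶠ y in nhdsWithin x₀ {x₀}ᶜ, slope f x₀ y ≠ 0 :=
    hslope.eventually_ne hf'
  have hev' : ∀ᶠ y in nhdsWithin x₀ {x₀}ᶜ, slope f x₀ y ≠ 0 ∧ y ≠ x₀ :=
    hev.and eventually_mem_nhdsWithin
  have hZev : ∀ᶠ y in Filter.principal Z, y ∈ Z :=
    Filter.eventually_principal.mpr fun _ h => h
  have : Filter.NeBot (nhdsWithin x₀ {x₀}ᶜ ⊓ Filter.principal Z) := hacc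
  obtain ⟨y, ⟨hsl, hyne⟩, hyZ⟩ :=
    ((hev'.filter_mono inf_le_left).and (hZev.filter_mono inf_le_right)).exists
  apply hsl
  rw [slope_def_field, show f y = 0 from hyZ.2, hfx₀]
  simp
end
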